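/- For every polynomial p of degree at most 2n that is nonnegative on [0,1], there exist polynomials a of degree at most n and b of degree at most n-1 such that p(x) = a(x)^2 + b(x)^2·x·(1-x) for all x. -/

import Mathlib

open Polynomial Set

/-! Auxiliary lemmas for Lukács' theorem. -/

private lemma lukDegOneSubX : (1 - X : ℝ[X]).degree ≤ 1 := by
  have h : (1 - X : ℝ[X]) = -(X - C 1) := by rw [C_1]; ring
  rw [h, degree_neg, degree_X_sub_C]

private lemma lukDegW : (X * (1 - X) : ℝ[X]).degree ≤ 2 := by
  calc (X * (1 - X) : ℝ[X]).degree ≤ (X:ℝ[X]).degree + (1 - X : ℝ[X]).degree := degree_mul_le _ _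
  _ ≤ 1 + 1 := add_le_add degree_X_le lukDegOneSubX
  _ = 2 := by norm_num

private lemma lukWbLtSucc (k : ℕ) : ((k:ℕ) : WithBot ℕ) < ((k+1:ℕ) : WithBot ℕ) := by
  exact_mod_cast Nat.lt_succ_self k

/-- The two possible representations (even and odd degree) of a polynomial
nonnegative on `[0,1]`. -/
def LukRep (p : ℝ[X]) : Prop :=
  (∃ k : ℕ, ∃ a b : ℝ[X], 2*k = p.natDegree ∧ a.degree ≤ (k : WithBot ℕ) ∧
      b.degree < (k : WithBot ℕ) ∧ p = a^2 + b^2 * (X*(1-X))) ∨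
  (∃ k : ℕ, ∃ u v : ℝ[X], 2*k+1 = p.natDegree ∧ u.degree < ((k+1:ℕ) : WithBot ℕ) ∧
      v.degree < ((k+1:ℕ) : WithBot ℕ) ∧ p = u^2*X + v^2*(1-X))

private lemma lukQuadRep (re im : ℝ) : ∃ a b : ℝ[X], a.degree ≤ 1 ∧ b.degree ≤ 0 ∧
    X^2 - C (2*re)*X + C (re^2+im^2) = a^2 + b^2 * (X*(1-X)) := by
  set s0 : ℝ := Real.sqrt (re^2 + im^2) with hs0def
  set r1 : ℝ := Real.sqrt ((1-re)^2 + im^2) with hr1def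
  have hs0nn : 0 ≤ s0 := Real.sqrt_nonneg _
  have hr1nn : 0 ≤ r1 := Real.sqrt_nonneg _
  have hs0 : s0^2 = re^2 + im^2 := Real.sq_sqrt (by positivity)
  have hr1 : r1^2 = (1-re)^2 + im^2 := Real.sq_sqrt (by positivity)
  have hs0re : re ≤ s0 := by
    rcases le_or_gt re 0 with h | h
    · linarith
    · nlinarith
  have hr1re : 1 - re ≤ r1 := by
    rcases le_or_gt (1 - re) 0 with h | h
    · linarith
    · nlinarith
  have hsum : 1 ≤ s0 + r1 := by linarith
  set α : ℝ := -(s0 + r1) with hα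
  set β : ℝ := s0 with hβ
  set d : ℝ := α^2 - 1 with hd
  have hd0 : 0 ≤ d := by nlinarith
  have hmid : 2*α*β + d = -(2*re) := by
    have : α^2 + 2*α*β = r1^2 - s0^2 := by rw [hα, hβ]; ring
    rw [hd]; rw [hs0, hr1] at this; nlinarith [this]
  refine ⟨C α * X + C β, C (Real.sqrt d), ?_, ?_, ?_⟩
  · calc (C α * X + C β).degree ≤ max (C α * X).degree (C β).degree := degree_add_le _ _
    _ ≤ max ((C α).degree + (X:ℝ[X]).degree) 0 := max_le_max (degree_mul_le _ _) degree_C_le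
    _ ≤ max (0 + 1) 0 := max_le_max (add_le_add degree_C_le degree_X_le) le_rfl
    _ ≤ 1 := by norm_num
  · exact degree_C_le
  · have hb2 : (C (Real.sqrt d))^2 = C d := by rw [← C_pow, Real.sq_sqrt hd0]
    rw [hb2]
    have E1 : (C α)^2 - C d = 1 := by
      rw [← C_pow, ← C_sub, show α^2 - d = 1 by rw [hd]; ring, C_1]
    have E2 : 2*(C α)*(C β) + C d = -(C (2*re)) := by
      rw [show (2:ℝ[X]) = C 2 from (map_ofNat C 2).symm, ← C_mul, ← C_mul, ← C_add, ← C_neg, hmid]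
    have E3 : (C β)^2 = C (re^2 + im^2) := by
      rw [← C_pow, hβ, hs0]
    linear_combination (-(X^2:ℝ[X])) * E1 - X * E2 - E3

private lemma lukNonnegExtend (p : ℝ[X]) (r : ℝ)
    (h : ∀ x ∈ Icc (0:ℝ) 1, x ≠ r → 0 ≤ p.eval x) :
    ∀ x ∈ Icc (0:ℝ) 1, 0 ≤ p.eval x := by
  have key : ∀ x : ℝ, ∀ f : ℕ → ℝ, (∀ n, f n ∈ Icc (0:ℝ) 1 ∧ f n ≠ r) →
      Filter.Tendsto f Filter.atTop (nhds x) → 0 ≤ p.eval x := by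
    intro x f hf hlim
    exact ge_of_tendsto ((p.continuous.tendsto x).comp hlim)
      (Filter.Eventually.of_forall fun n => h (f n) (hf n).1 (hf n).2)
  intro x hx
  by_cases hxr : x = r
  · subst hxr
    have hpow : ∀ n : ℕ, (0:ℝ) < (1/2)^(n+1) ∧ ((1:ℝ)/2)^(n+1) ≤ 1/2 := by
      intro n
      refine ⟨by positivity, ?_⟩
      apply pow_le_of_le_one (by norm_num) (by norm_num) (by omega)
    have hpl : Filter.Tendsto (fun n : ℕ => ((1:ℝ)/2)^(n+1)) Filter.atTop (nhds 0) :=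
      (tendsto_pow_atTop_nhds_zero_of_lt_one (by norm_num) (by norm_num)).comp
        (Filter.tendsto_add_atTop_nat 1)
    rcases lt_or_eq_of_le hx.2 with hx1 | hx1
    · refine key x (fun n => x + (1 - x) * (1/2)^(n+1)) (fun n => ?_) ?_
      · obtain ⟨h1, h2⟩ := hpow n
        have hxlt : 0 < 1 - x := by linarith
        refine ⟨⟨by nlinarith [hx.1], by nlinarith⟩, by intro hc; nlinarith⟩
      · have := (hpl.const_mul (1 - x)).const_add x
        simpa using this
    · refine key x (fun n => x - (1/2)^(n+1)) (fun n => ?_) ?_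
      · obtain ⟨h1, h2⟩ := hpow n
        refine ⟨⟨by nlinarith [hx.1, hx1], by nlinarith [hx.2]⟩, by intro hc; nlinarith⟩
      · have := hpl.const_sub x
        simpa using this
  · exact h x hx hxr

private lemma lukStepLinear (A B : ℝ) (hA : 0 ≤ A) (hB : 0 ≤ B) (hAB : A ≠ B) (p p₁ : ℝ[X])
    (hp₁ : p₁ ≠ 0) (hfac : p = (C B * X + C A * (1 - X)) * p₁) (h : LukRep p₁) : LukRep p := by
  set s : ℝ := Real.sqrt B with hs
  set t : ℝ := Real.sqrt A with ht
  have hs2 : (C s : ℝ[X])^2 = C B := by rw [← C_pow, Real.sq_sqrt hB]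
  have ht2 : (C t : ℝ[X])^2 = C A := by rw [← C_pow, Real.sq_sqrt hA]
  have hlin : (C B * X + C A * (1 - X) : ℝ[X]) = C (B - A) * X + C A := by
    rw [C_sub]; ring
  have hBA : B - A ≠ 0 := sub_ne_zero.2 (Ne.symm hAB)
  have hldeg : (C B * X + C A * (1 - X) : ℝ[X]).natDegree = 1 := by
    rw [hlin]; exact natDegree_linear hBA
  have hlne : (C B * X + C A * (1 - X) : ℝ[X]) ≠ 0 := by
    intro hc; rw [hc] at hldeg; simp at hldeg
  have hpdeg : p.natDegree = 1 + p₁.natDegree := by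
    rw [hfac, natDegree_mul hlne hp₁, hldeg]
  rcases h with ⟨k, a, b, hk, ha, hb, hrep⟩ | ⟨k, u, v, hk, hu, hv, hrep⟩
  · right
    refine ⟨k, C s * a - C t * b * (1-X), C t * a + C s * b * X, by omega, ?_, ?_, ?_⟩
    · have h1 : (C s * a).degree ≤ (k : WithBot ℕ) :=
        le_trans (degree_mul_le _ _) (by
          calc (C s).degree + a.degree ≤ 0 + (k:WithBot ℕ) := add_le_add degree_C_le ha
          _ = (k:WithBot ℕ) := by rw [zero_add])
      have h2 : (C t * b * (1-X)).degree ≤ (k : WithBot ℕ) := by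
        calc (C t * b * (1-X)).degree ≤ (C t * b).degree + (1-X:ℝ[X]).degree := degree_mul_le _ _
        _ ≤ ((C t).degree + b.degree) + 1 := add_le_add (degree_mul_le _ _) lukDegOneSubX
        _ ≤ (0 + b.degree) + 1 := by
            exact add_le_add (add_le_add degree_C_le le_rfl) le_rfl
        _ = b.degree + 1 := by rw [zero_add]
        _ ≤ (k : WithBot ℕ) := Nat.WithBot.add_one_le_of_lt hb
      refine lt_of_le_of_lt ?_ (lukWbLtSucc k)
      exact le_trans (degree_sub_le _ _) (max_le h1 h2)
    · have h1 : (C t * a).degree ≤ (k : WithBot ℕ) :=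
        le_trans (degree_mul_le _ _) (by
          calc (C t).degree + a.degree ≤ 0 + (k:WithBot ℕ) := add_le_add degree_C_le ha
          _ = (k:WithBot ℕ) := by rw [zero_add])
      have h2 : (C s * b * X).degree ≤ (k : WithBot ℕ) := by
        calc (C s * b * X).degree ≤ (C s * b).degree + (X:ℝ[X]).degree := degree_mul_le _ _
        _ ≤ ((C s).degree + b.degree) + 1 := add_le_add (degree_mul_le _ _) degree_X_le
        _ ≤ (0 + b.degree) + 1 := add_le_add (add_le_add degree_C_le le_rfl) le_rfl
        _ = b.degree + 1 := by rw [zero_add]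
        _ ≤ (k : WithBot ℕ) := Nat.WithBot.add_one_le_of_lt hb
      refine lt_of_le_of_lt ?_ (lukWbLtSucc k)
      exact le_trans (degree_add_le _ _) (max_le h1 h2)
    · rw [hfac, hrep, ← hs2, ← ht2]; ring
  · left
    refine ⟨k+1, C s * u * X + C t * v * (1-X), C s * v - C t * u, by omega, ?_, ?_, ?_⟩
    · have h1 : (C s * u * X).degree ≤ ((k+1:ℕ) : WithBot ℕ) := by
        calc (C s * u * X).degree ≤ (C s * u).degree + (X:ℝ[X]).degree := degree_mul_le _ _
        _ ≤ ((C s).degree + u.degree) + 1 := add_le_add (degree_mul_le _ _) degree_X_le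
        _ ≤ (0 + u.degree) + 1 := add_le_add (add_le_add degree_C_le le_rfl) le_rfl
        _ = u.degree + 1 := by rw [zero_add]
        _ ≤ ((k+1:ℕ) : WithBot ℕ) := Nat.WithBot.add_one_le_of_lt hu
      have h2 : (C t * v * (1-X)).degree ≤ ((k+1:ℕ) : WithBot ℕ) := by
        calc (C t * v * (1-X)).degree ≤ (C t * v).degree + (1-X:ℝ[X]).degree := degree_mul_le _ _
        _ ≤ ((C t).degree + v.degree) + 1 := add_le_add (degree_mul_le _ _) lukDegOneSubX
        _ ≤ (0 + v.degree) + 1 := add_le_add (add_le_add degree_C_le le_rfl) le_rfl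
        _ = v.degree + 1 := by rw [zero_add]
        _ ≤ ((k+1:ℕ) : WithBot ℕ) := Nat.WithBot.add_one_le_of_lt hv
      exact le_trans (degree_add_le _ _) (max_le h1 h2)
    · have h1 : (C s * v).degree < ((k+1:ℕ) : WithBot ℕ) :=
        lt_of_le_of_lt (le_trans (degree_mul_le _ _)
          (by calc (C s).degree + v.degree ≤ 0 + v.degree :=
                add_le_add degree_C_le le_rfl
              _ = v.degree := zero_add _)) hv
      have h2 : (C t * u).degree < ((k+1:ℕ) : WithBot ℕ) :=
        lt_of_le_of_lt (le_trans (degree_mul_le _ _)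
          (by calc (C t).degree + u.degree ≤ 0 + u.degree :=
                add_le_add degree_C_le le_rfl
              _ = u.degree := zero_add _)) hu
      exact lt_of_le_of_lt (degree_sub_le _ _) (max_lt h1 h2)
    · rw [hfac, hrep, ← hs2, ← ht2]; ring

private lemma lukStepQuad (q a₁ b₁ : ℝ[X]) (ha₁ : a₁.degree ≤ 1) (hb₁ : b₁.degree ≤ 0)
    (hrepq : q = a₁^2 + b₁^2 * (X*(1-X))) (hq2 : q.natDegree = 2) (hq0 : q ≠ 0)
    (p p₁ : ℝ[X]) (hp₁ : p₁ ≠ 0) (hfac : p = q * p₁) (h : LukRep p₁) : LukRep p := by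
  have hpdeg : p.natDegree = 2 + p₁.natDegree := by rw [hfac, natDegree_mul hq0 hp₁, hq2]
  have hcast : ∀ k : ℕ, (1 : WithBot ℕ) + (k : ℕ) = ((k+1:ℕ) : WithBot ℕ) := by
    intro k; push_cast; ring
  rcases h with ⟨k, a, b, hk, ha, hb, hrep⟩ | ⟨k, u, v, hk, hu, hv, hrep⟩
  · left
    refine ⟨k+1, a₁*a - b₁*b*(X*(1-X)), a₁*b + a*b₁, by omega, ?_, ?_, ?_⟩
    · have h1 : (a₁*a).degree ≤ ((k+1:ℕ) : WithBot ℕ) := by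
        calc (a₁*a).degree ≤ a₁.degree + a.degree := degree_mul_le _ _
        _ ≤ 1 + (k : WithBot ℕ) := add_le_add ha₁ ha
        _ = ((k+1:ℕ) : WithBot ℕ) := hcast k
      have h2 : (b₁*b*(X*(1-X))).degree ≤ ((k+1:ℕ) : WithBot ℕ) := by
        calc (b₁*b*(X*(1-X))).degree ≤ (b₁*b).degree + (X*(1-X):ℝ[X]).degree := degree_mul_le _ _
        _ ≤ (b₁.degree + b.degree) + 2 := add_le_add (degree_mul_le _ _) lukDegW
        _ ≤ (0 + b.degree) + 2 := add_le_add (add_le_add hb₁ le_rfl) le_rfl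
        _ = (b.degree + 1) + 1 := by rw [zero_add]; ring
        _ ≤ (k : WithBot ℕ) + 1 := add_le_add (Nat.WithBot.add_one_le_of_lt hb) le_rfl
        _ = ((k+1:ℕ) : WithBot ℕ) := by rw [add_comm] at *; exact hcast k
      exact le_trans (degree_sub_le _ _) (max_le h1 h2)
    · have h1 : (a₁*b).degree < ((k+1:ℕ) : WithBot ℕ) := by
        refine lt_of_le_of_lt ?_ (lukWbLtSucc k)
        calc (a₁*b).degree ≤ a₁.degree + b.degree := degree_mul_le _ _
        _ ≤ 1 + b.degree := add_le_add ha₁ le_rfl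
        _ = b.degree + 1 := add_comm _ _
        _ ≤ (k : WithBot ℕ) := Nat.WithBot.add_one_le_of_lt hb
      have h2 : (a*b₁).degree < ((k+1:ℕ) : WithBot ℕ) := by
        refine lt_of_le_of_lt ?_ (lukWbLtSucc k)
        calc (a*b₁).degree ≤ a.degree + b₁.degree := degree_mul_le _ _
        _ ≤ (k : WithBot ℕ) + 0 := add_le_add ha hb₁
        _ = (k : WithBot ℕ) := add_zero _
      exact lt_of_le_of_lt (degree_add_le _ _) (max_lt h1 h2)
    · rw [hfac, hrepq, hrep]; ring
  · right
    refine ⟨k+1, a₁*u - b₁*v*(1-X), a₁*v + b₁*u*X, by omega, ?_, ?_, ?_⟩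
    · have h1 : (a₁*u).degree < ((k+1+1:ℕ) : WithBot ℕ) := by
        refine lt_of_le_of_lt ?_ (lukWbLtSucc (k+1))
        calc (a₁*u).degree ≤ a₁.degree + u.degree := degree_mul_le _ _
        _ ≤ 1 + u.degree := add_le_add ha₁ le_rfl
        _ = u.degree + 1 := add_comm _ _
        _ ≤ ((k+1:ℕ) : WithBot ℕ) := Nat.WithBot.add_one_le_of_lt hu
      have h2 : (b₁*v*(1-X)).degree < ((k+1+1:ℕ) : WithBot ℕ) := by
        refine lt_of_le_of_lt ?_ (lukWbLtSucc (k+1))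
        calc (b₁*v*(1-X)).degree ≤ (b₁*v).degree + (1-X:ℝ[X]).degree := degree_mul_le _ _
        _ ≤ (b₁.degree + v.degree) + 1 := add_le_add (degree_mul_le _ _) lukDegOneSubX
        _ ≤ (0 + v.degree) + 1 := add_le_add (add_le_add hb₁ le_rfl) le_rfl
        _ = v.degree + 1 := by rw [zero_add]
        _ ≤ ((k+1:ℕ) : WithBot ℕ) := Nat.WithBot.add_one_le_of_lt hv
      exact lt_of_le_of_lt (degree_sub_le _ _) (max_lt h1 h2)
    · have h1 : (a₁*v).degree < ((k+1+1:ℕ) : WithBot ℕ) := by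
        refine lt_of_le_of_lt ?_ (lukWbLtSucc (k+1))
        calc (a₁*v).degree ≤ a₁.degree + v.degree := degree_mul_le _ _
        _ ≤ 1 + v.degree := add_le_add ha₁ le_rfl
        _ = v.degree + 1 := add_comm _ _
        _ ≤ ((k+1:ℕ) : WithBot ℕ) := Nat.WithBot.add_one_le_of_lt hv
      have h2 : (b₁*u*X).degree < ((k+1+1:ℕ) : WithBot ℕ) := by
        refine lt_of_le_of_lt ?_ (lukWbLtSucc (k+1))
        calc (b₁*u*X).degree ≤ (b₁*u).degree + (X:ℝ[X]).degree := degree_mul_le _ _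
        _ ≤ (b₁.degree + u.degree) + 1 := add_le_add (degree_mul_le _ _) degree_X_le
        _ ≤ (0 + u.degree) + 1 := add_le_add (add_le_add hb₁ le_rfl) le_rfl
        _ = u.degree + 1 := by rw [zero_add]
        _ ≤ ((k+1:ℕ) : WithBot ℕ) := Nat.WithBot.add_one_le_of_lt hu
      exact lt_of_le_of_lt (degree_add_le _ _) (max_lt h1 h2)
    · rw [hfac, hrepq, hrep]; ring

private lemma lukMain (d : ℕ) : ∀ p : ℝ[X], p ≠ 0 → p.natDegree ≤ d →
    (∀ x ∈ Icc (0:ℝ) 1, 0 ≤ p.eval x) → LukRep p := by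
  induction d with
  | zero =>
    intro p hp hdeg hpos
    left
    have h0 : p.natDegree = 0 := Nat.le_zero.1 hdeg
    obtain ⟨c, hc⟩ := natDegree_eq_zero.1 h0
    have hc0 : 0 ≤ c := by
      have := hpos 0 ⟨le_refl _, zero_le_one⟩
      rwa [← hc, eval_C] at this
    refine ⟨0, C (Real.sqrt c), 0, by omega, ?_, ?_, ?_⟩
    · simpa using (degree_C_le : (C (Real.sqrt c)).degree ≤ 0)
    · rw [degree_zero]; exact_mod_cast WithBot.bot_lt_coe 0
    · rw [← hc, ← C_pow, Real.sq_sqrt hc0]; ring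
  | succ d IH =>
    intro p hp hdeg hpos
    by_cases hd : p.natDegree ≤ d
    · exact IH p hp hd hpos
    have hdeq : p.natDegree = d+1 := le_antisymm hdeg (not_le.1 hd)
    have hnd0 : p.natDegree ≠ 0 := by omega
    obtain ⟨z, hz⟩ : ∃ z : ℂ, aeval z p = 0 := by
      have h1 : (p.map (algebraMap ℝ ℂ)).degree ≠ 0 := by
        rw [degree_map, degree_eq_natDegree hp]
        exact_mod_cast hnd0
      obtain ⟨z, hz⟩ := IsAlgClosed.exists_root _ h1
      exact ⟨z, by rwa [aeval_def, ← eval_map]⟩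
    by_cases him : z.im = 0
    · -- real root
      set r := z.re with hr
      have hroot : p.eval r = 0 := by
        have hzz : (z.re : ℂ) = z := by apply Complex.ext <;> simp [him]
        rw [← hzz] at hz
        erw [aeval_ofReal, Complex.ofReal_eq_zero] at hz
        exact hz
      by_cases hin : 0 < r ∧ r < 1
      · -- interior double root
        have hder : p.derivative.eval r = 0 := by
          have hloc : IsLocalMin (fun x => p.eval x) r := by
            have hmem : Ioo (0:ℝ) 1 ∈ nhds r := isOpen_Ioo.mem_nhds ⟨hin.1, hin.2⟩
            filter_upwards [hmem] with x hx
            rw [hroot]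
            exact hpos x ⟨hx.1.le, hx.2.le⟩
          have := hloc.deriv_eq_zero
          rwa [Polynomial.deriv] at this
        obtain ⟨p₂, hfac⟩ : ∃ p₂, p = (X - C r)^2 * p₂ := by
          obtain ⟨p₁, hfac⟩ := dvd_iff_isRoot.2 hroot
          have hp₁r : p₁.eval r = 0 := by
            have hdd : p.derivative = p₁ + (X - C r) * p₁.derivative := by
              rw [hfac, derivative_mul, derivative_X_sub_C]; ring
            have h2 := congrArg (eval r) hdd
            simp [hder] at h2
            linarith [h2]
          obtain ⟨p₂, hfac₂⟩ := dvd_iff_isRoot.2 hp₁r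
          exact ⟨p₂, by rw [hfac, hfac₂]; ring⟩
        have hq0 : ((X - C r)^2 : ℝ[X]) ≠ 0 := pow_ne_zero _ (X_sub_C_ne_zero r)
        have hp₂ : p₂ ≠ 0 := by intro h2; rw [h2, mul_zero] at hfac; exact hp hfac
        have hq2 : ((X - C r)^2 : ℝ[X]).natDegree = 2 := by
          rw [natDegree_pow, natDegree_X_sub_C]
        have hnd₁ : p₂.natDegree ≤ d := by
          have h3 := natDegree_mul hq0 hp₂
          rw [← hfac, hq2] at h3
          omega
        have hpos₂ : ∀ x ∈ Icc (0:ℝ) 1, 0 ≤ p₂.eval x := by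
          apply lukNonnegExtend p₂ r
          intro x hx hxr
          have h1 := hpos x hx
          rw [hfac] at h1
          simp only [eval_mul, eval_pow, eval_sub, eval_C, eval_X] at h1
          have hne : x - r ≠ 0 := sub_ne_zero.2 hxr
          have h2 : 0 < (x - r)^2 := lt_of_le_of_ne (sq_nonneg _) (Ne.symm (pow_ne_zero 2 hne))
          nlinarith [h1, h2]
        exact lukStepQuad ((X - C r)^2) (X - C r) 0 (le_of_eq (degree_X_sub_C r))
          (by rw [degree_zero]; exact bot_le) (by ring) hq2 hq0 p p₂ hp₂ hfac
          (IH p₂ hp₂ hnd₁ hpos₂)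
      · -- root on the boundary or outside (0,1)
        obtain ⟨p₁, hfac⟩ := dvd_iff_isRoot.2 hroot
        have hp₁ : p₁ ≠ 0 := by intro h2; rw [h2, mul_zero] at hfac; exact hp hfac
        have hnd₁ : p₁.natDegree ≤ d := by
          have h3 := natDegree_mul (X_sub_C_ne_zero r) hp₁
          rw [← hfac, natDegree_X_sub_C] at h3
          omega
        rcases not_and_or.1 hin with hr0 | hr1
        · -- r ≤ 0
          push_neg at hr0
          have hpos₁ : ∀ x ∈ Icc (0:ℝ) 1, 0 ≤ p₁.eval x := by
            apply lukNonnegExtend p₁ r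
            intro x hx hxr
            have h1 := hpos x hx
            rw [hfac] at h1
            simp only [eval_mul, eval_sub, eval_C, eval_X] at h1
            have h2 : 0 < x - r := by
              rcases lt_or_eq_of_le (le_trans hr0 hx.1) with h | h
              · linarith
              · exact absurd h.symm hxr
            nlinarith [h1, h2]
          refine lukStepLinear (-r) (1-r) (by linarith) (by linarith)
            (by intro h2; linarith [h2]) p p₁ hp₁ ?_ (IH p₁ hp₁ hnd₁ hpos₁)
          have hℓ : (C (1-r) * X + C (-r) * (1-X) : ℝ[X]) = X - C r := by
            rw [C_sub, C_neg, C_1]; ring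
          rw [hℓ]; exact hfac
        · -- r ≥ 1
          push_neg at hr1
          have hpos₁ : ∀ x ∈ Icc (0:ℝ) 1, 0 ≤ (-p₁).eval x := by
            apply lukNonnegExtend (-p₁) r
            intro x hx hxr
            have h1 := hpos x hx
            rw [hfac] at h1
            simp only [eval_mul, eval_sub, eval_C, eval_X, eval_neg]
            simp only [eval_mul, eval_sub, eval_C, eval_X] at h1
            have h2 : 0 < r - x := by
              rcases lt_or_eq_of_le (le_trans hx.2 hr1) with h | h
              · linarith
              · exact absurd h hxr
            nlinarith [h1, h2]
          have hp₁' : (-p₁ : ℝ[X]) ≠ 0 := neg_ne_zero.2 hp₁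
          have hnd₁' : (-p₁ : ℝ[X]).natDegree ≤ d := by rwa [natDegree_neg]
          refine lukStepLinear r (r-1) (by linarith) (by linarith)
            (by intro h2; linarith [h2]) p (-p₁) hp₁' ?_ (IH (-p₁) hp₁' hnd₁' hpos₁)
          have hℓ : (C (r-1) * X + C r * (1-X) : ℝ[X]) = C r - X := by
            rw [C_sub, C_1]; ring
          rw [hℓ, hfac]; ring
    · -- nonreal root: quadratic factor
      obtain ⟨p₁, hfac⟩ : ∃ p₁, p = (X^2 - C (2*z.re)*X + C (z.re^2+z.im^2)) * p₁ := by
        have h := p.quadratic_dvd_of_aeval_eq_zero_im_ne_zero hz him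
        have he : ‖z‖^2 = z.re^2 + z.im^2 := by
          rw [Complex.sq_norm, Complex.normSq_apply]; ring
        rw [he] at h
        exact h
      set q : ℝ[X] := X^2 - C (2*z.re)*X + C (z.re^2+z.im^2) with hq
      have hq2 : q.natDegree = 2 := by rw [hq]; compute_degree!
      have hq0 : q ≠ 0 := by intro h2; rw [h2] at hq2; simp at hq2
      have hp₁ : p₁ ≠ 0 := by intro h2; rw [h2, mul_zero] at hfac; exact hp hfac
      have hnd₁ : p₁.natDegree ≤ d := by
        have h3 := natDegree_mul hq0 hp₁
        rw [← hfac, hq2] at h3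
        omega
      have hqpos : ∀ x : ℝ, 0 < q.eval x := by
        intro x
        have h2 : 0 < z.im^2 := lt_of_le_of_ne (sq_nonneg _) (Ne.symm (pow_ne_zero 2 him))
        rw [hq]
        simp only [eval_add, eval_sub, eval_mul, eval_pow, eval_C, eval_X]
        nlinarith [sq_nonneg (x - z.re)]
      have hpos₁ : ∀ x ∈ Icc (0:ℝ) 1, 0 ≤ p₁.eval x := by
        intro x hx
        have h1 := hpos x hx
        rw [hfac] at h1
        rw [eval_mul] at h1
        nlinarith [h1, hqpos x]
      obtain ⟨a₁, b₁, ha₁, hb₁, hrepq⟩ := lukQuadRep z.re z.im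
      exact lukStepQuad q a₁ b₁ ha₁ hb₁ hrepq hq2 hq0 p p₁ hp₁ hfac (IH p₁ hp₁ hnd₁ hpos₁)

/-- Lukács theorem, even degree case. -/
theorem lukacs_even (n : ℕ) (p : Polynomial ℝ)
    (hdeg : p.degree ≤ (2 * n : ℕ))
    (hpos : ∀ x ∈ Set.Icc (0:ℝ) 1, 0 ≤ p.eval x) :
    ∃ a b : Polynomial ℝ, a.degree ≤ (n : ℕ) ∧ b.degree < (n : ℕ) ∧
      ∀ x : ℝ, p.eval x = (a.eval x)^2 + (b.eval x)^2 * (x * (1 - x)) := by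
  by_cases hp : p = 0
  · refine ⟨0, 0, ?_, ?_, ?_⟩
    · rw [degree_zero]; exact bot_le
    · rw [degree_zero]; exact_mod_cast WithBot.bot_lt_coe n
    · intro x; rw [hp]; simp
  · have hnd : p.natDegree ≤ 2*n := natDegree_le_iff_degree_le.2 hdeg
    rcases lukMain p.natDegree p hp le_rfl hpos with
      ⟨k, a, b, hk, ha, hb, hrep⟩ | ⟨k, u, v, hk, hu, hv, hrep⟩
    · have hkn : k ≤ n := by omega
      refine ⟨a, b, le_trans ha (by exact_mod_cast hkn), lt_of_lt_of_le hb (by exact_mod_cast hkn), ?_⟩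
      intro x
      rw [hrep]
      simp [eval_add, eval_mul, eval_pow, eval_sub, eval_one, eval_X]
    · have hkn : k + 1 ≤ n := by omega
      refine ⟨u*X + v*(1-X), u - v, ?_, ?_, ?_⟩
      · have h1 : (u*X).degree ≤ ((k+1:ℕ) : WithBot ℕ) := by
          calc (u*X).degree ≤ u.degree + (X:ℝ[X]).degree := degree_mul_le _ _
          _ ≤ u.degree + 1 := add_le_add le_rfl degree_X_le
          _ ≤ ((k+1:ℕ) : WithBot ℕ) := Nat.WithBot.add_one_le_of_lt hu
        have h2 : (v*(1-X)).degree ≤ ((k+1:ℕ) : WithBot ℕ) := by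
          calc (v*(1-X)).degree ≤ v.degree + (1-X:ℝ[X]).degree := degree_mul_le _ _
          _ ≤ v.degree + 1 := add_le_add le_rfl lukDegOneSubX
          _ ≤ ((k+1:ℕ) : WithBot ℕ) := Nat.WithBot.add_one_le_of_lt hv
        refine le_trans (degree_add_le _ _) (le_trans (max_le h1 h2) ?_)
        exact_mod_cast hkn
      · refine lt_of_le_of_lt (degree_sub_le _ _) (lt_of_lt_of_le (max_lt hu hv) ?_)
        exact_mod_cast hkn
      · intro x
        have hid : p = (u*X + v*(1-X))^2 + (u - v)^2 * (X*(1-X)) := by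
          rw [hrep]; ring
        rw [hid]
        simp [eval_add, eval_mul, eval_pow, eval_sub, eval_one, eval_X]
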